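/- Let H be an N×N positive semidefinite Hermitian matrix, let v ∈ ℂ^N, and let z ∈ ℂ∖ℝ. Then | z ( 1 − v^* (zI_N − H)^{-1} v ) | ≥ |Im z|. More precisely, | Im[ z ( 1 − v^* (zI_N − H)^{-1} v ) ] | = |Im z| · ( 1 + |z|^{-2} v^* (I − z^{-1}H)^{-1} H (I − z̄^{-1}H)^{-1} v ) ≥ |Im z|. -/

import Mathlib

open Matrix
open scoped ComplexOrder

/-- Lemma `maj`: for a positive semidefinite `H`, a vector `v` and a nonreal `z`,
`|Im[z(1 − v^*(zI−H)^{-1}v)]| = |Im z|·(1 + |z|^{-2} v^*(I−z^{-1}H)^{-1}H(I−z̄^{-1}H)^{-1}v)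
  ≥ |Im z|`, and in particular `|z(1 − v^*(zI−H)^{-1}v)| ≥ |Im z|`. -/
theorem statement9 {N : ℕ} (H : Matrix (Fin N) (Fin N) ℂ) (hH : H.PosSemidef)
    (v : Fin N → ℂ) (z : ℂ) (hz : z.im ≠ 0) :
    |(z * (1 - star v ⬝ᵥ ((z • (1 : Matrix (Fin N) (Fin N) ℂ) - H)⁻¹).mulVec v)).im|
        = |z.im| * (1 + (‖z‖ ^ 2)⁻¹ *
            (star v ⬝ᵥ (((1 : Matrix (Fin N) (Fin N) ℂ) - z⁻¹ • H)⁻¹ * H *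
              ((1 : Matrix (Fin N) (Fin N) ℂ) - (starRingEnd ℂ z)⁻¹ • H)⁻¹).mulVec v).re) ∧
    |z.im| ≤
      |(z * (1 - star v ⬝ᵥ ((z • (1 : Matrix (Fin N) (Fin N) ℂ) - H)⁻¹).mulVec v)).im| ∧
    |z.im| ≤
      ‖z * (1 - star v ⬝ᵥ ((z • (1 : Matrix (Fin N) (Fin N) ℂ) - H)⁻¹).mulVec v)‖ := by
  have hz0 : z ≠ 0 := fun h => hz (by simp [h])
  have hzc0 : (starRingEnd ℂ) z ≠ 0 := by simpa using hz0
  set M : Matrix (Fin N) (Fin N) ℂ := z • (1 : Matrix (Fin N) (Fin N) ℂ) - H with hMdef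
  have hHerm := hH.1
  -- invertibility of M
  have hdet : IsUnit M.det := by
    rw [isUnit_iff_ne_zero]
    intro h0
    obtain ⟨x, hx0, hx⟩ := (Matrix.exists_mulVec_eq_zero_iff).mpr h0
    have hx' : H.mulVec x = z • x := by
      have h1 : M.mulVec x = z • x - H.mulVec x := by
        simp [hMdef, Matrix.sub_mulVec, Matrix.smul_mulVec]
      rw [hx] at h1
      rw [eq_comm, sub_eq_zero] at h1
      exact h1.symm
    have h2 : star x ⬝ᵥ H.mulVec x = z * (star x ⬝ᵥ x) := by
      rw [hx', dotProduct_smul, smul_eq_mul]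
    have h3 := hH.dotProduct_mulVec_nonneg x
    rw [Complex.le_def] at h3
    have hxx := (dotProduct_star_self_pos_iff (R := ℂ)).mpr hx0
    rw [Complex.lt_def] at hxx
    have him := congrArg Complex.im h2
    rw [Complex.mul_im, ← hxx.2, ← h3.2] at him
    simp only [Complex.zero_im] at him
    have : z.im * (star x ⬝ᵥ x).re = 0 := by linarith
    rcases mul_eq_zero.mp this with h | h
    · exact hz h
    · rw [h] at hxx; exact lt_irrefl _ hxx.1
  have hMH : Mᴴ = (starRingEnd ℂ) z • (1 : Matrix (Fin N) (Fin N) ℂ) - H := by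
    simp [hMdef, Matrix.conjTranspose_smul, hHerm.eq]
  have hdetH : IsUnit (Mᴴ).det := by rw [Matrix.det_conjTranspose]; exact hdet.star
  -- identities for P and Q
  have hP : (1 : Matrix (Fin N) (Fin N) ℂ) - z⁻¹ • H = z⁻¹ • M := by
    simp [hMdef, smul_sub, smul_smul, inv_mul_cancel₀ hz0]
  have hQ : (1 : Matrix (Fin N) (Fin N) ℂ) - ((starRingEnd ℂ) z)⁻¹ • H
      = ((starRingEnd ℂ) z)⁻¹ • Mᴴ := by
    simp [hMH, smul_sub, smul_smul, inv_mul_cancel₀ hzc0]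
  have hA : ((1 : Matrix (Fin N) (Fin N) ℂ) - z⁻¹ • H)⁻¹ = z • M⁻¹ := by
    apply Matrix.inv_eq_right_inv
    rw [hP, Matrix.smul_mul, Matrix.mul_smul, smul_smul, inv_mul_cancel₀ hz0, one_smul,
      Matrix.mul_nonsing_inv _ hdet]
  have hB : ((1 : Matrix (Fin N) (Fin N) ℂ) - ((starRingEnd ℂ) z)⁻¹ • H)⁻¹
      = (z • M⁻¹)ᴴ := by
    apply Matrix.inv_eq_right_inv
    rw [hQ, Matrix.conjTranspose_smul, Matrix.conjTranspose_nonsing_inv,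
      Matrix.smul_mul, Matrix.mul_smul, smul_smul]
    simp [Complex.star_def, inv_mul_cancel₀ hzc0, Matrix.mul_nonsing_inv _ hdetH]
  set A : Matrix (Fin N) (Fin N) ℂ := z • M⁻¹ with hAdef
  -- invertibility of P, Q
  have hdetP : IsUnit ((1 : Matrix (Fin N) (Fin N) ℂ) - z⁻¹ • H).det := by
    rw [hP, Matrix.det_smul]
    exact ((isUnit_iff_ne_zero.2 (inv_ne_zero hz0)).pow _).mul hdet
  have hdetQ : IsUnit ((1 : Matrix (Fin N) (Fin N) ℂ) - ((starRingEnd ℂ) z)⁻¹ • H).det := by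
    rw [hQ, Matrix.det_smul]
    exact ((isUnit_iff_ne_zero.2 (inv_ne_zero hzc0)).pow _).mul hdetH
  -- key matrix identity
  have hAP : A * ((1 : Matrix (Fin N) (Fin N) ℂ) - z⁻¹ • H) = 1 := by
    rw [← hA]; exact Matrix.nonsing_inv_mul _ hdetP
  have hQA : ((1 : Matrix (Fin N) (Fin N) ℂ) - ((starRingEnd ℂ) z)⁻¹ • H) * Aᴴ = 1 := by
    rw [← hB]; exact Matrix.mul_nonsing_inv _ hdetQ
  have key : A - Aᴴ = (z⁻¹ - ((starRingEnd ℂ) z)⁻¹) • (A * H * Aᴴ) := by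
    have e1 : A * (((1 : Matrix (Fin N) (Fin N) ℂ) - ((starRingEnd ℂ) z)⁻¹ • H)
        - ((1 : Matrix (Fin N) (Fin N) ℂ) - z⁻¹ • H)) * Aᴴ = A - Aᴴ := by
      rw [Matrix.mul_sub, Matrix.sub_mul, Matrix.mul_assoc, hQA, mul_one, hAP,
        Matrix.one_mul]
    have e2 : ((1 : Matrix (Fin N) (Fin N) ℂ) - ((starRingEnd ℂ) z)⁻¹ • H)
        - ((1 : Matrix (Fin N) (Fin N) ℂ) - z⁻¹ • H) = (z⁻¹ - ((starRingEnd ℂ) z)⁻¹) • H := by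
      rw [sub_smul]; abel
    rw [← e1, e2, Matrix.mul_smul, Matrix.smul_mul]
  -- scalar consequences
  set s : ℂ := star v ⬝ᵥ A.mulVec v with hsdef
  set w : ℂ := star v ⬝ᵥ (A * H * Aᴴ).mulVec v with hwdef
  have hstars : star s = star v ⬝ᵥ Aᴴ.mulVec v := by
    rw [hsdef, star_dotProduct, star_star, star_mulVec, dotProduct_mulVec]
  have hsw : s - star s = (z⁻¹ - ((starRingEnd ℂ) z)⁻¹) * w := by
    rw [hstars, hsdef, ← dotProduct_sub, ← Matrix.sub_mulVec, key,
      Matrix.smul_mulVec, dotProduct_smul, smul_eq_mul]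
  have hw := (hH.mul_mul_conjTranspose_same A).dotProduct_mulVec_nonneg v
  rw [Complex.le_def] at hw
  have hwim : w.im = 0 := hw.2.symm
  have hwre : 0 ≤ w.re := by simpa using hw.1
  -- imaginary part of s
  have hnsq : 0 < Complex.normSq z := Complex.normSq_pos.mpr hz0
  have hsim : s.im = -(z.im * w.re) / Complex.normSq z := by
    have h := congrArg Complex.im hsw
    simp only [Complex.sub_im, Complex.mul_im, Complex.sub_re, Complex.inv_im,
      Complex.inv_re, Complex.conj_im, Complex.conj_re, Complex.normSq_conj,
      Complex.star_def, hwim] at h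
    rw [eq_div_iff hnsq.ne']
    field_simp at h
    have h3 : s.im * Complex.normSq z * (2 * Complex.normSq z)
        = -(z.im * w.re) * (2 * Complex.normSq z) := by linear_combination (Complex.normSq z) * h
    exact mul_right_cancel₀ (by positivity) h3
  -- rewrite the main expression
  have hT : z * (1 - star v ⬝ᵥ M⁻¹.mulVec v) = z - s := by
    rw [mul_sub, mul_one, hsdef, hAdef, Matrix.smul_mulVec, dotProduct_smul,
      smul_eq_mul]
  have hTim : (z * (1 - star v ⬝ᵥ M⁻¹.mulVec v)).im
      = z.im * (1 + (Complex.normSq z)⁻¹ * w.re) := by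
    rw [hT, Complex.sub_im, hsim]
    field_simp
    ring
  have hfac : (1 : ℝ) ≤ 1 + (Complex.normSq z)⁻¹ * w.re := by
    nlinarith [inv_pos.mpr hnsq]
  have habs2 : ‖z‖ ^ 2 = Complex.normSq z := Complex.sq_norm z
  have hgoalw : (star v ⬝ᵥ (((1 : Matrix (Fin N) (Fin N) ℂ) - z⁻¹ • H)⁻¹ * H *
      ((1 : Matrix (Fin N) (Fin N) ℂ) - (starRingEnd ℂ z)⁻¹ • H)⁻¹).mulVec v) = w := by
    rw [hA, hB, hwdef]
  have habsim : |(z * (1 - star v ⬝ᵥ M⁻¹.mulVec v)).im|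
      = |z.im| * (1 + (Complex.normSq z)⁻¹ * w.re) := by
    rw [hTim, abs_mul, abs_of_pos (lt_of_lt_of_le one_pos hfac)]
  refine ⟨?_, ?_, ?_⟩
  · rw [habsim, hgoalw, habs2]
  · rw [habsim]
    exact le_mul_of_one_le_right (abs_nonneg _) hfac
  · calc |z.im| ≤ |(z * (1 - star v ⬝ᵥ M⁻¹.mulVec v)).im| := by
          rw [habsim]; exact le_mul_of_one_le_right (abs_nonneg _) hfac
      _ ≤ ‖z * (1 - star v ⬝ᵥ M⁻¹.mulVec v)‖ := Complex.abs_im_le_norm _
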